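/- Let G be a weighted bipartite graph and w* a weight threshold. Define G_{≥w*} as the subgraph of G with edges of weight ≥ w*. Then the significant (α,β)-community of q has weight ≥ w* if and only if q belongs to some connected subgraph of G_{≥w*} satisfying the (α,β) degree constraints, which happens if and only if q is in the (α,β)-core of G_{≥w*}. -/

import Mathlib

variable {V : Type*}

/-- Upper-layer vertices of an (edge-set) bipartite subgraph. -/
def upperVerts [DecidableEq V] (S : Finset (V × V)) : Finset V := S.image Prod.fst

/-- Lower-layer vertices. -/
def lowerVerts [DecidableEq V] (S : Finset (V × V)) : Finset V := S.image Prod.snd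

/-- All vertices. -/
def bverts [DecidableEq V] (S : Finset (V × V)) : Finset V := upperVerts S ∪ lowerVerts S

/-- Degree of an upper vertex. -/
def updeg [DecidableEq V] (S : Finset (V × V)) (u : V) : ℕ :=
  (S.filter (fun e => e.1 = u)).card

/-- Degree of a lower vertex. -/
def lowdeg [DecidableEq V] (S : Finset (V × V)) (v : V) : ℕ :=
  (S.filter (fun e => e.2 = v)).card

/-- The (α,β) degree constraint. -/
def DegConstr [DecidableEq V] (α β : ℕ) (S : Finset (V × V)) : Prop :=
  (∀ u ∈ upperVerts S, α ≤ updeg S u) ∧ (∀ v ∈ lowerVerts S, β ≤ lowdeg S v)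

/-- Adjacency relation induced by the edge set. -/
def adjRel (S : Finset (V × V)) (a b : V) : Prop := (a, b) ∈ S ∨ (b, a) ∈ S

/-- Connectivity of an edge-set subgraph. -/
def Conn [DecidableEq V] (S : Finset (V × V)) : Prop :=
  ∀ a ∈ bverts S, ∀ b ∈ bverts S, Relation.ReflTransGen (adjRel S) a b

/-- `C` is the (α,β)-core of the bipartite graph with edge set `E`:
it is a subgraph satisfying the degree constraints that contains every
subgraph of `E` satisfying the constraints (hence it is maximal). -/
def IsCore [DecidableEq V] (E : Finset (V × V)) (α β : ℕ) (C : Finset (V × V)) : Prop :=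
  C ⊆ E ∧ DegConstr α β C ∧ ∀ S ⊆ E, DegConstr α β S → S ⊆ C

/-- `C` is the (α,β)-community of `q`: the maximal connected subgraph of the
core `Ecore` containing `q`. -/
def IsCommunity [DecidableEq V] (Ecore : Finset (V × V)) (q : V) (C : Finset (V × V)) : Prop :=
  C ⊆ Ecore ∧ Conn C ∧ q ∈ bverts C ∧ ∀ S ⊆ Ecore, Conn S → q ∈ bverts S → S ⊆ C

/-- `S` is the significant (α,β)-community of `q` inside the (α,β)-community `K`:
connected, contains `q`, satisfies the degree constraints, maximizes the minimum
edge weight `Finset.inf w`, and no proper supergraph with the same properties has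
equal weight. -/
def IsSigCom [DecidableEq V] (K : Finset (V × V)) (α β : ℕ) (q : V) (w : V × V → ENNReal)
    (S : Finset (V × V)) : Prop :=
  S ⊆ K ∧ Conn S ∧ q ∈ bverts S ∧ DegConstr α β S ∧
  (∀ S' ⊆ K, Conn S' → q ∈ bverts S' → DegConstr α β S' → S'.inf w ≤ S.inf w) ∧
  (∀ S', S ⊂ S' → S' ⊆ K → Conn S' → q ∈ bverts S' → DegConstr α β S' → S'.inf w ≠ S.inf w)

/-- The α-offset of `u`: the maximal `β` such that `u` is in the (α,β)-core. -/
noncomputable def saOff [DecidableEq V] (E : Finset (V × V)) (u : V) (α : ℕ) : ℕ :=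
  sSup {b | ∃ C, IsCore E α b C ∧ u ∈ bverts C}

lemma mem_bverts' [DecidableEq V] {S : Finset (V × V)} {a : V} :
    a ∈ bverts S ↔ ∃ e ∈ S, e.1 = a ∨ e.2 = a := by
  simp only [bverts, upperVerts, lowerVerts, Finset.mem_union, Finset.mem_image]
  aesop

lemma bverts_mono' [DecidableEq V] {S T : Finset (V × V)} (h : S ⊆ T) :
    bverts S ⊆ bverts T := by
  intro a ha
  rw [mem_bverts'] at *
  obtain ⟨e, he, h2⟩ := ha
  exact ⟨e, h he, h2⟩

/-- f(SC) ≥ w* iff q belongs to some connected subgraph of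
G_{≥w*} satisfying the degree constraints, iff q is in the (α,β)-core of
G_{≥w*}. -/
theorem threshold_iff [DecidableEq V] (E : Finset (V × V)) (α β : ℕ) (q : V)
    (w : V × V → ENNReal) (wstar : ENNReal) (C K S : Finset (V × V))
    (hC : IsCore E α β C) (hK : IsCommunity C q K) (hS : IsSigCom K α β q w S)
    (Ew : Finset (V × V)) (hEw : ∀ e, e ∈ Ew ↔ e ∈ E ∧ wstar ≤ w e) :
    (wstar ≤ S.inf w ↔
        ∃ T ⊆ Ew, Conn T ∧ q ∈ bverts T ∧ DegConstr α β T) ∧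
      ((∃ T ⊆ Ew, Conn T ∧ q ∈ bverts T ∧ DegConstr α β T) ↔
        ∃ Cw, IsCore Ew α β Cw ∧ q ∈ bverts Cw) := by
  classical
  obtain ⟨hCE, hCdeg, hCmax⟩ := hC
  obtain ⟨hKC, hKconn, hqK, hKmax⟩ := hK
  obtain ⟨hSK, hSconn, hqS, hSdeg, hSopt, _⟩ := hS
  have hEwE : Ew ⊆ E := fun e he => ((hEw e).1 he).1
  constructor
  · constructor
    · intro hw
      refine ⟨S, ?_, hSconn, hqS, hSdeg⟩
      intro e heS
      exact (hEw e).2 ⟨hCE (hKC (hSK heS)), le_trans hw (Finset.inf_le heS)⟩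
    · rintro ⟨T, hTEw, hTconn, hqT, hTdeg⟩
      have hTC : T ⊆ C := hCmax T (hTEw.trans hEwE) hTdeg
      have hTK : T ⊆ K := hKmax T hTC hTconn hqT
      have h1 : T.inf w ≤ S.inf w := hSopt T hTK hTconn hqT hTdeg
      exact le_trans (Finset.le_inf fun e he => ((hEw e).1 (hTEw he)).2) h1
  · constructor
    · rintro ⟨T, hTEw, hTconn, hqT, hTdeg⟩
      set Cw := (Ew.powerset.filter fun S => DegConstr α β S).sup id with hCwdef
      have hmem : ∀ S' ⊆ Ew, DegConstr α β S' → S' ⊆ Cw := by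
        intro S' h1 h2
        exact Finset.le_sup (f := id)
          (Finset.mem_filter.2 ⟨Finset.mem_powerset.2 h1, h2⟩)
      have hsub : Cw ⊆ Ew := by
        intro e he
        rw [hCwdef, Finset.mem_sup] at he
        obtain ⟨S', hS', he'⟩ := he
        exact Finset.mem_powerset.1 (Finset.mem_filter.1 hS').1 he'
      have hdeg : DegConstr α β Cw := by
        constructor
        · intro u hu
          obtain ⟨e, he, heu⟩ := Finset.mem_image.1 hu
          rw [hCwdef, Finset.mem_sup] at he
          obtain ⟨S', hS', he'⟩ := he
          have h2 : DegConstr α β S' := (Finset.mem_filter.1 hS').2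
          have hsub' : S' ⊆ Cw :=
            hmem S' (Finset.mem_powerset.1 (Finset.mem_filter.1 hS').1) h2
          have hα : α ≤ updeg S' u :=
            h2.1 u (Finset.mem_image.2 ⟨e, he', heu⟩)
          exact le_trans hα
            (Finset.card_le_card (Finset.filter_subset_filter _ hsub'))
        · intro v hv
          obtain ⟨e, he, hev⟩ := Finset.mem_image.1 hv
          rw [hCwdef, Finset.mem_sup] at he
          obtain ⟨S', hS', he'⟩ := he
          have h2 : DegConstr α β S' := (Finset.mem_filter.1 hS').2
          have hsub' : S' ⊆ Cw :=
            hmem S' (Finset.mem_powerset.1 (Finset.mem_filter.1 hS').1) h2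
          have hβ : β ≤ lowdeg S' v :=
            h2.2 v (Finset.mem_image.2 ⟨e, he', hev⟩)
          exact le_trans hβ
            (Finset.card_le_card (Finset.filter_subset_filter _ hsub'))
      exact ⟨Cw, ⟨hsub, hdeg, hmem⟩, bverts_mono' (hmem T hTEw hTdeg) hqT⟩
    · rintro ⟨Cw, ⟨hsub, ⟨hdu, hdl⟩, _⟩, hq⟩
      set R := Relation.ReflTransGen (adjRel Cw) with hRdef
      set T := Cw.filter (fun e => R q e.1) with hTdef
      have hmemT : ∀ e, e ∈ T ↔ e ∈ Cw ∧ R q e.1 := by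
        intro e; simp [hTdef]
      -- edges give reachability between their endpoints
      have hstep : ∀ e ∈ Cw, adjRel Cw e.1 e.2 := by
        intro e he
        exact Or.inl (by simpa using he)
      have hR2 : ∀ e ∈ Cw, R q e.1 → R q e.2 := by
        intro e he h
        exact h.tail (hstep e he)
      have hR1 : ∀ e ∈ Cw, R q e.2 → R q e.1 := by
        intro e he h
        exact h.tail (Or.inr (by simpa using he))
      -- q is a vertex of T
      have hqT : q ∈ bverts T := by
        obtain ⟨e, he, hq'⟩ := mem_bverts'.1 hq
        rcases hq' with h1 | h2
        · have : e ∈ T := (hmemT e).2 ⟨he, by rw [h1]⟩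
          exact mem_bverts'.2 ⟨e, this, Or.inl h1⟩
        · have hRe1 : R q e.1 := hR1 e he (by rw [h2])
          exact mem_bverts'.2 ⟨e, (hmemT e).2 ⟨he, hRe1⟩, Or.inr h2⟩
      -- lift reachability in Cw to reachability in T
      have hlift : ∀ a, R q a → Relation.ReflTransGen (adjRel T) q a := by
        intro a h
        induction h with
        | refl => exact Relation.ReflTransGen.refl
        | @tail b c hqb hbc ih =>
          refine ih.tail ?_
          rcases hbc with h1 | h2
          · exact Or.inl ((hmemT _).2 ⟨h1, hqb⟩)
          · have hqc : R q c := hqb.tail (Or.inr h2)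
            exact Or.inr ((hmemT _).2 ⟨h2, hqc⟩)
      have hreach : ∀ a ∈ bverts T, Relation.ReflTransGen (adjRel T) q a := by
        intro a ha
        obtain ⟨e, he, h2⟩ := mem_bverts'.1 ha
        obtain ⟨heCw, hRe⟩ := (hmemT e).1 he
        rcases h2 with h1 | h1
        · exact hlift a (h1 ▸ hRe)
        · exact hlift a (h1 ▸ hR2 e heCw hRe)
      have hTsymm : Symmetric (adjRel T) := fun a b h => h.symm
      have hconn : Conn T := by
        intro a ha b hb
        exact ((@Relation.ReflTransGen.symmetric _ _ ⟨hTsymm⟩).symm _ _ (hreach a ha)).trans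
          (hreach b hb)
      have hTdeg : DegConstr α β T := by
        constructor
        · intro u hu
          obtain ⟨e, he, heu⟩ := Finset.mem_image.1 hu
          obtain ⟨heCw, hRe⟩ := (hmemT e).1 he
          have hRu : R q u := heu ▸ hRe
          have huCw : u ∈ upperVerts Cw := Finset.mem_image.2 ⟨e, heCw, heu⟩
          have hα : α ≤ updeg Cw u := hdu u huCw
          refine le_trans hα (Finset.card_le_card ?_)
          intro e' he'
          obtain ⟨he'Cw, he'u⟩ := Finset.mem_filter.1 he'
          exact Finset.mem_filter.2 ⟨(hmemT e').2 ⟨he'Cw, he'u ▸ hRu⟩, he'u⟩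
        · intro v hv
          obtain ⟨e, he, hev⟩ := Finset.mem_image.1 hv
          obtain ⟨heCw, hRe⟩ := (hmemT e).1 he
          have hRv : R q v := hev ▸ hR2 e heCw hRe
          have hvCw : v ∈ lowerVerts Cw := Finset.mem_image.2 ⟨e, heCw, hev⟩
          have hβ : β ≤ lowdeg Cw v := hdl v hvCw
          refine le_trans hβ (Finset.card_le_card ?_)
          intro e' he'
          obtain ⟨he'Cw, he'v⟩ := Finset.mem_filter.1 he'
          have : R q e'.1 := hR1 e' he'Cw (he'v ▸ hRv)
          exact Finset.mem_filter.2 ⟨(hmemT e').2 ⟨he'Cw, this⟩, he'v⟩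
      exact ⟨T, (Finset.filter_subset _ _).trans hsub, hconn, hqT, hTdeg⟩
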